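/- Let Q be a connected Laplacian matrix on V = {0,…,n} with Laplacian lattice L_G. Then the packing radius of L_G under the simplicial distance function, Pac_△(L_G) = sup{R ≥ 0 : for all distinct q₁, q₂ ∈ L_G the sets {x ∈ H_0 : d_△(q₁,x) ≤ R} and {x ∈ H_0 : d_△(q₂,x) ≤ R} are disjoint}, equals MC₁(G)/(n+1), where MC₁(G) is the ℓ₁-minimum cut of the multigraph, i.e. the minimum over all nonempty proper subsets S ⊊ V of μ₁(S) = Σ_{i∈S, j∉S} b_{ij}. -/

import Mathlib

open Finset

/-- A Laplacian matrix of a multigraph on vertex set `Fin (n+1)`: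
symmetric, nonpositive off-diagonal entries, all row sums zero. -/
def IsLaplacian (n : ℕ) (Q : Matrix (Fin (n+1)) (Fin (n+1)) ℤ) : Prop :=
  (∀ i j, Q i j = Q j i) ∧ (∀ i j, i ≠ j → Q i j ≤ 0) ∧ (∀ i, ∑ j, Q i j = 0)

/-- A connected Laplacian matrix: the graph with an edge `{i,j}` whenever
`b_{ij} = -Q i j > 0` is connected. -/
def IsConnectedLaplacian (n : ℕ) (Q : Matrix (Fin (n+1)) (Fin (n+1)) ℤ) : Prop :=
  IsLaplacian n Q ∧ (SimpleGraph.fromRel (fun i j => Q i j ≠ 0)).Connected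

/-- The Laplacian lattice: the subgroup of `ℤ^{n+1}` generated by the rows of `Q`. -/
noncomputable def lapLattice (n : ℕ) (Q : Matrix (Fin (n+1)) (Fin (n+1)) ℤ) :
    AddSubgroup (Fin (n+1) → ℤ) :=
  AddSubgroup.closure (Set.range fun i => Q i)

/-- The hyperplane `H_0 = {x ∈ ℝ^{n+1} : ∑ x i = 0}`. -/
def H0 (n : ℕ) : Set (Fin (n+1) → ℝ) := {x | ∑ i, x i = 0}

/-- The simplicial distance function on `H_0`: `d_△(p,q) = max_i (p i - q i)`. -/
noncomputable def simpDist (n : ℕ) (p q : Fin (n+1) → ℝ) : ℝ :=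
  Finset.univ.sup' Finset.univ_nonempty fun i => p i - q i

/-- Coercion of an integer vector to a real vector. -/
noncomputable def intVec (n : ℕ) (q : Fin (n+1) → ℤ) : Fin (n+1) → ℝ := fun i => (q i : ℝ)

/-- The root lattice `A_n = {x ∈ ℤ^{n+1} : ∑ x i = 0}`. -/
def rootLattice (n : ℕ) : AddSubgroup (Fin (n+1) → ℤ) where
  carrier := {x | ∑ i, x i = 0}
  add_mem' := by
    intro a b ha hb
    simp only [Set.mem_setOf_eq, Pi.add_apply, Finset.sum_add_distrib] at *
    omega
  zero_mem' := by simp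
  neg_mem' := by
    intro a ha
    simp only [Set.mem_setOf_eq, Pi.neg_apply, Finset.sum_neg_distrib] at *
    omega

/-- The `i`-th row of `Q` as a real vector. -/
noncomputable def rowVec (n : ℕ) (Q : Matrix (Fin (n+1)) (Fin (n+1)) ℤ) (i : Fin (n+1)) :
    Fin (n+1) → ℝ := fun j => (Q i j : ℝ)

/-- `u^σ_k = b_{σ(0)} + ⋯ + b_{σ(k)}`. -/
noncomputable def uPerm (n : ℕ) (Q : Matrix (Fin (n+1)) (Fin (n+1)) ℤ)
    (σ : Equiv.Perm (Fin (n+1))) (k : Fin (n+1)) : Fin (n+1) → ℝ :=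
  ∑ j ∈ Finset.Iic k, rowVec n Q (σ j)

/-- The Delaunay polytope of the origin: the union over all permutations `σ`
of the simplices `△_σ = conv{u^σ_0, …, u^σ_n}`. -/
noncomputable def HDel (n : ℕ) (Q : Matrix (Fin (n+1)) (Fin (n+1)) ℤ) :
    Set (Fin (n+1) → ℝ) :=
  ⋃ σ : Equiv.Perm (Fin (n+1)), convexHull ℝ (Set.range (uPerm n Q σ))

/-- `u_S = ∑_{i ∈ S} b_i`, as a real vector. -/
noncomputable def uCut (n : ℕ) (Q : Matrix (Fin (n+1)) (Fin (n+1)) ℤ)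
    (S : Finset (Fin (n+1))) : Fin (n+1) → ℝ := ∑ i ∈ S, rowVec n Q i

/-- the packing radius of the Laplacian lattice of a connected
multigraph under the simplicial distance function equals `MC₁(G)/(n+1)`,
where `MC₁(G)` is the ℓ₁-minimum cut. -/
lemma mem_lapLattice_iff (n : ℕ) (Q : Matrix (Fin (n+1)) (Fin (n+1)) ℤ)
    (v : Fin (n+1) → ℤ) :
    v ∈ lapLattice n Q ↔ ∃ c : Fin (n+1) → ℤ, ∑ i, c i • Q i = v := by
  rw [lapLattice, ← Submodule.span_int_eq_addSubgroupClosure]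
  exact Submodule.mem_span_range_iff_exists_fun ℤ

lemma lapLattice_sum_zero (n : ℕ) (Q : Matrix (Fin (n+1)) (Fin (n+1)) ℤ)
    (hQ : IsLaplacian n Q) (v : Fin (n+1) → ℤ) (hv : v ∈ lapLattice n Q) :
    ∑ j, v j = 0 := by
  obtain ⟨c, rfl⟩ := (mem_lapLattice_iff n Q v).1 hv
  have : ∀ j, (∑ i, c i • Q i) j = ∑ i, c i * Q i j := fun j => by
    simp [Finset.sum_apply]
  simp only [this]
  rw [Finset.sum_comm]
  apply Finset.sum_eq_zero
  intro i _
  rw [← Finset.mul_sum, hQ.2.2 i, mul_zero]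

lemma row_mem_lapLattice (n : ℕ) (Q : Matrix (Fin (n+1)) (Fin (n+1)) ℤ) (i : Fin (n+1)) :
    Q i ∈ lapLattice n Q :=
  AddSubgroup.subset_closure ⟨i, rfl⟩

lemma col_sum (n : ℕ) (Q : Matrix (Fin (n+1)) (Fin (n+1)) ℤ) (hQ : IsLaplacian n Q)
    (j : Fin (n+1)) : ∑ i, Q i j = 0 := by
  simp only [fun i => hQ.1 i j]; exact hQ.2.2 j

lemma combo_apply (n : ℕ) (Q : Matrix (Fin (n+1)) (Fin (n+1)) ℤ) (hQ : IsLaplacian n Q)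
    (c : Fin (n+1) → ℤ) (j : Fin (n+1)) :
    (∑ i, c i • Q i) j = ∑ i, (c j - c i) * (- Q i j) := by
  have h1 : (∑ i, c i • Q i) j = ∑ i, c i * Q i j := by
    simp [Finset.sum_apply]
  have h2 : ∑ i, (c j - c i) * (- Q i j)
      = -(c j * ∑ i, Q i j) + ∑ i, c i * Q i j := by
    rw [Finset.mul_sum, ← Finset.sum_neg_distrib, ← Finset.sum_add_distrib]
    exact Finset.sum_congr rfl fun i _ => by ring
  rw [h1, h2, col_sum n Q hQ j]; ring

lemma cut_swap (n : ℕ) (Q : Matrix (Fin (n+1)) (Fin (n+1)) ℤ) (hQ : IsLaplacian n Q)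
    (S : Finset (Fin (n+1))) :
    ∑ j ∈ S, ∑ i ∈ Sᶜ, -(Q i j) = ∑ i ∈ S, ∑ j ∈ Sᶜ, -(Q i j) := by
  exact Finset.sum_congr rfl fun j _ => Finset.sum_congr rfl fun i _ => by rw [hQ.1 i j]

lemma exists_cut_le (n : ℕ) (Q : Matrix (Fin (n+1)) (Fin (n+1)) ℤ) (hQ : IsLaplacian n Q)
    (c : Fin (n+1) → ℤ) (hc : ∑ i, c i • Q i ≠ 0) :
    ∃ S : Finset (Fin (n+1)), S.Nonempty ∧ S ≠ univ ∧
      (∑ i ∈ S, ∑ j ∈ Sᶜ, -(Q i j)) ≤ ∑ j, max ((∑ i, c i • Q i) j) 0 := by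
  have hne : (univ.image c).Nonempty := (univ_nonempty).image c
  set M := (univ.image c).max' hne with hM
  set S : Finset (Fin (n+1)) := univ.filter (fun i => c i = M) with hS
  have hmemS : ∀ i, i ∈ S ↔ c i = M := fun i => by simp [hS]
  have hle : ∀ i, c i ≤ M := fun i =>
    Finset.le_max' _ _ (Finset.mem_image_of_mem c (mem_univ i))
  obtain ⟨i₀, hi₀, hci₀⟩ := Finset.mem_image.1 ((univ.image c).max'_mem hne)
  have hSne : S.Nonempty := ⟨i₀, (hmemS i₀).2 hci₀⟩
  have hSuniv : S ≠ univ := by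
    intro h
    apply hc
    have hconst : ∀ i, c i = M := fun i => (hmemS i).1 (h ▸ mem_univ i)
    funext j
    rw [combo_apply n Q hQ c j]
    simp only [Pi.zero_apply]
    rw [Finset.sum_eq_zero]
    intro i _
    rw [hconst i, hconst j]; ring
  refine ⟨S, hSne, hSuniv, ?_⟩
  have step1 : ∑ j ∈ S, ((∑ i, c i • Q i) j) ≤ ∑ j, max ((∑ i, c i • Q i) j) 0 := by
    calc ∑ j ∈ S, ((∑ i, c i • Q i) j) ≤ ∑ j ∈ S, max ((∑ i, c i • Q i) j) 0 :=
          Finset.sum_le_sum fun j _ => le_max_left _ _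
      _ ≤ ∑ j, max ((∑ i, c i • Q i) j) 0 :=
          Finset.sum_le_sum_of_subset_of_nonneg (subset_univ S)
            (fun j _ _ => le_max_right _ _)
  refine le_trans ?_ step1
  rw [← cut_swap n Q hQ S]
  apply Finset.sum_le_sum
  intro j hj
  rw [combo_apply n Q hQ c j]
  have hsplit : ∑ i, (c j - c i) * (- Q i j)
      = ∑ i ∈ S, (c j - c i) * (- Q i j) + ∑ i ∈ Sᶜ, (c j - c i) * (- Q i j) := by
    rw [Finset.sum_add_sum_compl]
  rw [hsplit]
  have hz : ∑ i ∈ S, (c j - c i) * (- Q i j) = 0 := by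
    apply Finset.sum_eq_zero
    intro i hi
    rw [(hmemS i).1 hi, (hmemS j).1 hj]; ring
  rw [hz, zero_add]
  apply Finset.sum_le_sum
  intro i hi
  have hij : i ≠ j := by
    intro h; rw [Finset.mem_compl, h] at hi; exact hi hj
  have hb : 0 ≤ -Q i j := by linarith [hQ.2.1 i j hij]
  have hci : c i ≠ M := by
    intro h; exact (Finset.mem_compl.1 hi) ((hmemS i).2 h)
  have : 1 ≤ c j - c i := by
    have := hle i; rw [(hmemS j).1 hj]; omega
  nlinarith

lemma cut_vector_sum (n : ℕ) (Q : Matrix (Fin (n+1)) (Fin (n+1)) ℤ) (hQ : IsLaplacian n Q)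
    (S : Finset (Fin (n+1))) :
    ∑ j, max ((∑ i ∈ S, Q i) j) 0 = ∑ i ∈ S, ∑ j ∈ Sᶜ, -(Q i j) := by
  have happ : ∀ j, (∑ i ∈ S, Q i) j = ∑ i ∈ S, Q i j := fun j => by
    exact Finset.sum_apply _ _ _
  have hin : ∀ j ∈ S, (∑ i ∈ S, Q i) j = ∑ i ∈ Sᶜ, -(Q i j) := by
    intro j hj
    rw [happ]
    have hsplit : ∑ i ∈ S, Q i j + ∑ i ∈ Sᶜ, Q i j = 0 := by
      rw [Finset.sum_add_sum_compl]; exact col_sum n Q hQ j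
    rw [Finset.sum_neg_distrib]; omega
  have hout : ∀ j ∈ Sᶜ, (∑ i ∈ S, Q i) j ≤ 0 := by
    intro j hj
    rw [happ]
    apply Finset.sum_nonpos
    intro i hi
    apply hQ.2.1
    intro h; rw [Finset.mem_compl, ← h] at hj; exact hj hi
  rw [← Finset.sum_add_sum_compl S]
  have h1 : ∑ j ∈ S, max ((∑ i ∈ S, Q i) j) 0 = ∑ j ∈ S, ∑ i ∈ Sᶜ, -(Q i j) := by
    apply Finset.sum_congr rfl
    intro j hj
    rw [hin j hj]
    exact max_eq_left (Finset.sum_nonneg fun i hi => by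
      have hij : i ≠ j := by intro h; rw [Finset.mem_compl, h] at hi; exact hi hj
      linarith [hQ.2.1 i j hij])
  have h2 : ∑ j ∈ Sᶜ, max ((∑ i ∈ S, Q i) j) 0 = 0 := by
    apply Finset.sum_eq_zero
    intro j hj
    exact max_eq_right (hout j hj)
  rw [h1, h2, add_zero]
  exact Finset.sum_congr rfl fun j _ => Finset.sum_congr rfl fun i _ => by rw [hQ.1 i j]

lemma cut_pos (n : ℕ) (Q : Matrix (Fin (n+1)) (Fin (n+1)) ℤ)
    (hQ : IsConnectedLaplacian n Q) (S : Finset (Fin (n+1)))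
    (hS : S.Nonempty) (hS' : S ≠ univ) :
    1 ≤ ∑ i ∈ S, ∑ j ∈ Sᶜ, -(Q i j) := by
  obtain ⟨a, ha⟩ := hS
  obtain ⟨b, hb⟩ : ∃ b, b ∉ S := by
    by_contra h
    push_neg at h
    exact hS' (Finset.eq_univ_iff_forall.2 h)
  obtain ⟨w⟩ := hQ.2.preconnected a b
  obtain ⟨d, _, hd1, hd2⟩ := w.exists_boundary_dart (↑S : Set (Fin (n+1))) ha hb
  have hadj := d.adj
  rw [SimpleGraph.fromRel_adj] at hadj
  obtain ⟨hne, hQne⟩ := hadj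
  have hQd : Q d.fst d.snd ≠ 0 := by
    rcases hQne with h | h
    · exact h
    · rw [hQ.1.1]; exact h
  have hble : 1 ≤ -(Q d.fst d.snd) := by
    have := hQ.1.2.1 d.fst d.snd hne
    omega
  have hnn : ∀ i ∈ S, ∀ j ∈ Sᶜ, (0:ℤ) ≤ -(Q i j) := by
    intro i hi j hj
    have hij : i ≠ j := fun h => (Finset.mem_compl.1 hj) (h ▸ hi)
    linarith [hQ.1.2.1 i j hij]
  calc (1:ℤ) ≤ -(Q d.fst d.snd) := hble
    _ ≤ ∑ j ∈ Sᶜ, -(Q d.fst j) := by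
        apply Finset.single_le_sum (f := fun j => -(Q d.fst j))
          (fun j hj => hnn d.fst hd1 j hj)
        exact Finset.mem_compl.2 hd2
    _ ≤ ∑ i ∈ S, ∑ j ∈ Sᶜ, -(Q i j) := by
        apply Finset.single_le_sum (f := fun i => ∑ j ∈ Sᶜ, -(Q i j))
          (fun i hi => Finset.sum_nonneg (hnn i hi)) hd1

lemma balls_disjoint_iff (n : ℕ) (p₁ p₂ : Fin (n+1) → ℝ) (R : ℝ) :
    Disjoint {x | x ∈ H0 n ∧ simpDist n p₁ x ≤ R} {x | x ∈ H0 n ∧ simpDist n p₂ x ≤ R}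
      ↔ (n+1 : ℝ) * R < ∑ i, max (p₁ i) (p₂ i) := by
  have hmem : ∀ (p : Fin (n+1) → ℝ) (x), x ∈ {x | x ∈ H0 n ∧ simpDist n p x ≤ R} ↔
      (∑ i, x i = 0 ∧ ∀ i, p i - x i ≤ R) := by
    intro p x
    simp only [Set.mem_setOf_eq, H0, simpDist, Finset.sup'_le_iff, mem_univ, forall_true_left]
  constructor
  · intro hdisj
    by_contra hlt
    push_neg at hlt
    set s : ℝ := (n+1) * R - ∑ i, max (p₁ i) (p₂ i) with hs
    have hs0 : 0 ≤ s := by linarith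
    set x : Fin (n+1) → ℝ := fun i => max (p₁ i) (p₂ i) - R + (if i = 0 then s else 0) with hx
    have hxsum : ∑ i, x i = 0 := by
      rw [hx]
      simp only
      rw [Finset.sum_add_distrib, Finset.sum_sub_distrib, Finset.sum_const,
        Finset.sum_ite_eq' univ (0 : Fin (n+1)) (fun _ => s)]
      simp [Finset.card_univ, hs]
    have hxball : ∀ p : Fin (n+1) → ℝ, (∀ i, p i ≤ max (p₁ i) (p₂ i)) →
        ∀ i, p i - x i ≤ R := by
      intro p hp i
      rw [hx]
      simp only
      have := hp i
      split <;> [linarith; linarith]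
    have h1 : x ∈ {x | x ∈ H0 n ∧ simpDist n p₁ x ≤ R} :=
      (hmem p₁ x).2 ⟨hxsum, hxball p₁ (fun i => le_max_left _ _)⟩
    have h2 : x ∈ {x | x ∈ H0 n ∧ simpDist n p₂ x ≤ R} :=
      (hmem p₂ x).2 ⟨hxsum, hxball p₂ (fun i => le_max_right _ _)⟩
    exact Set.disjoint_left.1 hdisj h1 h2
  · intro hlt
    rw [Set.disjoint_left]
    intro x h1 h2
    obtain ⟨hxs, hx1⟩ := (hmem p₁ x).1 h1
    obtain ⟨-, hx2⟩ := (hmem p₂ x).1 h2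
    have key : ∀ i, max (p₁ i) (p₂ i) - R ≤ x i := by
      intro i
      have := hx1 i; have := hx2 i
      rcases max_cases (p₁ i) (p₂ i) with ⟨h, _⟩ | ⟨h, _⟩ <;> rw [h] <;> linarith
    have : ∑ i, (max (p₁ i) (p₂ i) - R) ≤ ∑ i, x i := Finset.sum_le_sum fun i _ => key i
    rw [hxs, Finset.sum_sub_distrib, Finset.sum_const, Finset.card_univ] at this
    simp only [Fintype.card_fin, nsmul_eq_mul] at this
    push_cast at this
    linarith


theorem packing_radius_eq_min_cut_over_n_plus_one (n : ℕ) (hn : 1 ≤ n)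
    (Q : Matrix (Fin (n+1)) (Fin (n+1)) ℤ) (hQ : IsConnectedLaplacian n Q) :
    sSup {R : ℝ | 0 ≤ R ∧ ∀ q₁ ∈ lapLattice n Q, ∀ q₂ ∈ lapLattice n Q, q₁ ≠ q₂ →
        Disjoint {x | x ∈ H0 n ∧ simpDist n (intVec n q₁) x ≤ R}
                 {x | x ∈ H0 n ∧ simpDist n (intVec n q₂) x ≤ R}} =
      (sInf {c : ℝ | ∃ S : Finset (Fin (n+1)), S.Nonempty ∧ S ≠ Finset.univ ∧
          c = ∑ i ∈ S, ∑ j ∈ Sᶜ, -(Q i j : ℝ)}) / (n + 1) := by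
  have hL := hQ.1
  set μ : Finset (Fin (n+1)) → ℤ := fun S => ∑ i ∈ S, ∑ j ∈ Sᶜ, -(Q i j) with hμdef
  set 𝒮 : Finset (Finset (Fin (n+1))) :=
    univ.powerset.filter (fun S => S.Nonempty ∧ S ≠ univ) with h𝒮def
  have h01 : (Fin.last n) ≠ (0 : Fin (n+1)) := by
    intro h
    have := congrArg Fin.val h
    simp only [Fin.val_last, Fin.val_zero] at this
    omega
  have h𝒮ne : 𝒮.Nonempty := by
    refine ⟨{0}, ?_⟩
    simp only [h𝒮def, Finset.mem_filter, Finset.mem_powerset, Finset.subset_univ, true_and]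
    refine ⟨Finset.singleton_nonempty 0, ?_⟩
    intro h
    have : Fin.last n ∈ ({0} : Finset (Fin (n+1))) := h ▸ mem_univ _
    exact h01 (Finset.mem_singleton.1 this)
  set MZ : ℤ := (𝒮.image μ).min' (h𝒮ne.image μ) with hMZdef
  have hMZ_mem : ∃ S : Finset (Fin (n+1)), S.Nonempty ∧ S ≠ univ ∧ μ S = MZ := by
    obtain ⟨S, hS, hSval⟩ := Finset.mem_image.1 ((𝒮.image μ).min'_mem (h𝒮ne.image μ))
    simp only [h𝒮def, Finset.mem_filter] at hS
    exact ⟨S, hS.2.1, hS.2.2, hSval⟩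
  have hMZ_le : ∀ S : Finset (Fin (n+1)), S.Nonempty → S ≠ univ → MZ ≤ μ S := by
    intro S h1 h2
    apply Finset.min'_le
    apply Finset.mem_image_of_mem
    simp only [h𝒮def, Finset.mem_filter, Finset.mem_powerset]
    exact ⟨Finset.subset_univ S, h1, h2⟩
  have hMZ_pos : 1 ≤ MZ := by
    obtain ⟨S, h1, h2, h3⟩ := hMZ_mem
    rw [← h3]
    exact cut_pos n Q hQ S h1 h2
  have hInf : sInf {c : ℝ | ∃ S : Finset (Fin (n+1)), S.Nonempty ∧ S ≠ Finset.univ ∧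
      c = ∑ i ∈ S, ∑ j ∈ Sᶜ, -(Q i j : ℝ)} = (MZ : ℝ) := by
    apply IsLeast.csInf_eq
    constructor
    · obtain ⟨S, h1, h2, h3⟩ := hMZ_mem
      refine ⟨S, h1, h2, ?_⟩
      have h3' : (∑ i ∈ S, ∑ j ∈ Sᶜ, -(Q i j)) = MZ := h3
      rw [← h3']
      push_cast
      rfl
    · rintro c ⟨S, h1, h2, rfl⟩
      have h4 := hMZ_le S h1 h2
      have h4' : MZ ≤ ∑ i ∈ S, ∑ j ∈ Sᶜ, -(Q i j) := h4
      have : ((MZ : ℤ) : ℝ) ≤ ((∑ i ∈ S, ∑ j ∈ Sᶜ, -(Q i j) : ℤ) : ℝ) := Int.cast_le.2 h4'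
      refine le_trans this (le_of_eq ?_)
      push_cast
      rfl
  have hnpos : (0:ℝ) < (n:ℝ) + 1 := by positivity
  have hset : {R : ℝ | 0 ≤ R ∧ ∀ q₁ ∈ lapLattice n Q, ∀ q₂ ∈ lapLattice n Q, q₁ ≠ q₂ →
      Disjoint {x | x ∈ H0 n ∧ simpDist n (intVec n q₁) x ≤ R}
               {x | x ∈ H0 n ∧ simpDist n (intVec n q₂) x ≤ R}}
      = Set.Ico 0 ((MZ:ℝ)/((n:ℝ)+1)) := by
    ext R
    simp only [Set.mem_setOf_eq, Set.mem_Ico]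
    constructor
    · rintro ⟨hR0, hdisj⟩
      refine ⟨hR0, ?_⟩
      obtain ⟨S, h1, h2, h3⟩ := hMZ_mem
      have hcv := cut_vector_sum n Q hL S
      have hv : (∑ i ∈ S, Q i) ∈ lapLattice n Q :=
        sum_mem fun i _ => row_mem_lapLattice n Q i
      have h0 : (0 : Fin (n+1) → ℤ) ∈ lapLattice n Q := zero_mem _
      have hvne : (0 : Fin (n+1) → ℤ) ≠ ∑ i ∈ S, Q i := by
        intro h
        rw [← h] at hcv
        simp only [Pi.zero_apply, max_self, Finset.sum_const, smul_zero] at hcv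
        have h3' : (∑ i ∈ S, ∑ j ∈ Sᶜ, -(Q i j)) = MZ := h3
        omega
      have hd := hdisj 0 h0 (∑ i ∈ S, Q i) hv hvne
      rw [balls_disjoint_iff] at hd
      have hsum : ∑ i, max (intVec n 0 i) (intVec n (∑ i ∈ S, Q i) i)
          = ((∑ j, max ((∑ i ∈ S, Q i) j) 0 : ℤ) : ℝ) := by
        push_cast
        apply Finset.sum_congr rfl
        intro i _
        simp [intVec, max_comm]
      rw [hsum, hcv] at hd
      have h3' : (∑ i ∈ S, ∑ j ∈ Sᶜ, -(Q i j)) = MZ := h3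
      rw [h3'] at hd
      rw [lt_div_iff₀ hnpos]
      linarith
    · rintro ⟨hR0, hRlt⟩
      refine ⟨hR0, ?_⟩
      intro q₁ hq₁ q₂ hq₂ hne12
      rw [balls_disjoint_iff]
      have hv : q₂ - q₁ ∈ lapLattice n Q := sub_mem hq₂ hq₁
      have hv0 : q₂ - q₁ ≠ 0 := sub_ne_zero_of_ne (Ne.symm hne12)
      obtain ⟨c, hc⟩ := (mem_lapLattice_iff n Q (q₂ - q₁)).1 hv
      obtain ⟨S, h1, h2, h3⟩ := exists_cut_le n Q hL c (by rw [hc]; exact hv0)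
      rw [hc] at h3
      have h4 : MZ ≤ ∑ i ∈ S, ∑ j ∈ Sᶜ, -(Q i j) := hMZ_le S h1 h2
      have hq₁sum : ∑ j, q₁ j = 0 := lapLattice_sum_zero n Q hL q₁ hq₁
      have key : (MZ : ℤ) ≤ ∑ i, max (q₁ i) (q₂ i) := by
        have heq : ∑ i, max (q₁ i) (q₂ i) = ∑ i, q₁ i + ∑ j, max ((q₂ - q₁) j) 0 := by
          rw [← Finset.sum_add_distrib]
          apply Finset.sum_congr rfl
          intro i _
          simp only [Pi.sub_apply]
          omega
        rw [heq, hq₁sum, zero_add]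
        exact le_trans h4 h3
      have hcast : ((MZ:ℤ):ℝ) ≤ ∑ i, max (intVec n q₁ i) (intVec n q₂ i) := by
        have : ((∑ i, max (q₁ i) (q₂ i) : ℤ) : ℝ)
            = ∑ i, max (intVec n q₁ i) (intVec n q₂ i) := by
          push_cast
          exact Finset.sum_congr rfl fun i _ => rfl
        rw [← this]
        exact_mod_cast key
      rw [lt_div_iff₀ hnpos] at hRlt
      push_cast at hcast ⊢
      linarith
  rw [hset, hInf]
  have hlt : (0:ℝ) < (MZ:ℝ)/((n:ℝ)+1) := by
    apply div_pos _ hnpos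
    exact_mod_cast (by omega : (0:ℤ) < MZ)
  rw [csSup_Ico hlt]
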